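/- A vector a : Fin N → ℝ is a cyclic orthonormal generator in ℝ^N if and only if there exists θ : Fin N → ℝ with (θ_0 ≡ π/4 (mod 2π) or θ_0 ≡ 5π/4 (mod 2π)), with θ_n + θ_{−n} ≡ π/2 (mod 2π) for every n ∈ Fin N with n ≠ 0 (where −n denotes negation in Fin N), and such that a_k = (√2/N) · ∑_{n ∈ Fin N} cos((2πn/N)·k + θ_n) for every k ∈ Fin N. -/

import Mathlib

open Real

noncomputable def eN (N : ℕ) (m : ℤ) : ℂ := Complex.exp (2 * π * Complex.I * m / N)

lemma eN_add (N : ℕ) (m m' : ℤ) : eN N (m + m') = eN N m * eN N m' := by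
  rw [eN, eN, eN, ← Complex.exp_add]
  push_cast
  ring_nf

lemma eN_zero (N : ℕ) : eN N 0 = 1 := by simp [eN]

lemma eN_mul_self (N : ℕ) (hN : N ≠ 0) (t : ℤ) : eN N (N * t) = 1 := by
  rw [eN]
  have h : 2 * ↑π * Complex.I * ↑((N : ℤ) * t) / (N : ℂ) = (t : ℂ) * (2 * ↑π * Complex.I) := by
    have : (N : ℂ) ≠ 0 := Nat.cast_ne_zero.mpr hN
    field_simp
    push_cast; ring
  rw [h, Complex.exp_int_mul_two_pi_mul_I]

lemma eN_congr (N : ℕ) (hN : N ≠ 0) {x y : ℤ} (h : (N : ℤ) ∣ (x - y)) : eN N x = eN N y := by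
  obtain ⟨t, ht⟩ := h
  have : x = y + N * t := by linarith
  rw [this, eN_add, eN_mul_self N hN, mul_one]

lemma eN_eq_one_iff (N : ℕ) (hN : N ≠ 0) (m : ℤ) : eN N m = 1 ↔ (N : ℤ) ∣ m := by
  constructor
  · intro h
    rw [eN, Complex.exp_eq_one_iff] at h
    obtain ⟨n, hn⟩ := h
    have hNc : (N : ℂ) ≠ 0 := Nat.cast_ne_zero.mpr hN
    have hπ : (π : ℂ) ≠ 0 := by exact_mod_cast Real.pi_ne_zero
    have hI : Complex.I ≠ 0 := Complex.I_ne_zero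
    have h3 : (m : ℂ) = (n : ℂ) * N := by
      have hne : (2 * (π:ℂ) * Complex.I) ≠ 0 := by
        simp [hπ, hI]
      field_simp at hn
      apply mul_left_cancel₀ hne
      linear_combination (2 * (π:ℂ) * Complex.I) * hn
    have : m = n * N := by exact_mod_cast h3
    exact ⟨n, by linarith⟩
  · intro ⟨t, ht⟩
    rw [ht, eN_mul_self N hN]

lemma eN_pow (N : ℕ) (m : ℤ) (k : ℕ) : eN N (m * k) = (eN N m) ^ k := by
  induction k with
  | zero => simp [eN_zero]
  | succ k ih =>
    have : m * ((k : ℤ) + 1) = m * k + m := by ring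
    push_cast
    rw [this, eN_add, ih, pow_succ]

lemma eN_orth (N : ℕ) (hN : N ≠ 0) (m : ℤ) :
    (∑ k : Fin N, eN N (m * k)) = if (N : ℤ) ∣ m then (N : ℂ) else 0 := by
  by_cases h : (N : ℤ) ∣ m
  · simp only [h, if_true]
    have h1 : ∀ k : Fin N, eN N (m * k) = 1 := by
      intro k
      rw [eN_eq_one_iff N hN]
      exact Dvd.dvd.mul_right h _
    rw [Finset.sum_congr rfl (fun k _ => h1 k)]
    simp
  · simp only [h, if_false]
    have hζ : eN N m ≠ 1 := fun hc => h ((eN_eq_one_iff N hN m).mp hc)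
    have : (∑ k : Fin N, eN N (m * k)) = ∑ k ∈ Finset.range N, (eN N m) ^ k := by
      rw [Finset.sum_range fun k => (eN N m) ^ k]
      exact Finset.sum_congr rfl fun k _ => eN_pow N m k
    rw [this, geom_sum_eq hζ]
    have : (eN N m) ^ N = 1 := by
      rw [← eN_pow, eN_eq_one_iff N hN]
      exact Dvd.dvd.mul_left dvd_rfl m  -- N ∣ m * N
    rw [this]
    simp

lemma dvd_shift {d a b : ℤ} (h : d ∣ a - b) : (d ∣ a ↔ d ∣ b) := by
  constructor
  · intro h2; simpa using dvd_sub h2 h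
  · intro h2; simpa using dvd_add h2 h

section FinLemmas
variable {N : ℕ} [NeZero N]

lemma fin_val_add (m n : Fin N) :
    (N : ℤ) ∣ ((m : ℕ) : ℤ) + ((n : ℕ) : ℤ) - (((m + n : Fin N) : ℕ) : ℤ) := by
  have h : ((m + n : Fin N) : ℕ) = ((m : ℕ) + (n : ℕ)) % N := Fin.val_add m n
  rw [h]
  push_cast
  exact Int.dvd_self_sub_of_emod_eq rfl

lemma fin_dvd_val_iff (x : Fin N) : (N : ℤ) ∣ ((x : ℕ) : ℤ) ↔ x = 0 := by
  constructor
  · intro h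
    have h2 : N ∣ (x : ℕ) := Int.natCast_dvd_natCast.mp h
    have := Nat.eq_zero_of_dvd_of_lt h2
    have hx : (x : ℕ) = 0 := by
      by_contra hc
      exact absurd x.isLt (not_lt.mpr (Nat.le_of_dvd (Nat.pos_of_ne_zero hc) h2))
    exact Fin.ext hx
  · rintro rfl; simp

lemma fin_dvd_sub_iff (m n : Fin N) : (N : ℤ) ∣ ((m : ℕ) : ℤ) - ((n : ℕ) : ℤ) ↔ m = n := by
  have h1 := fin_val_add (m - n) n
  have h2 : (m - n) + n = m := sub_add_cancel m n
  rw [h2] at h1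
  have h3 : (N : ℤ) ∣ (((m : ℕ) : ℤ) - ((n : ℕ) : ℤ)) - (((m - n : Fin N) : ℕ) : ℤ) := by
    have := dvd_neg.mpr h1
    obtain ⟨c, hc⟩ := h1; exact ⟨-c, by linear_combination -hc⟩
  rw [dvd_shift h3, fin_dvd_val_iff, sub_eq_zero]

lemma fin_dvd_add_iff (m n : Fin N) : (N : ℤ) ∣ ((m : ℕ) : ℤ) + ((n : ℕ) : ℤ) ↔ m = -n := by
  rw [dvd_shift (fin_val_add m n), fin_dvd_val_iff, ← eq_neg_iff_add_eq_zero]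

end FinLemmas

lemma conj_eN (N : ℕ) (m : ℤ) : (starRingEnd ℂ) (eN N m) = eN N (-m) := by
  rw [eN, eN, ← Complex.exp_conj]
  congr 1
  simp only [map_div₀, map_mul, map_ofNat, Complex.conj_I, Complex.conj_ofReal,
    map_natCast, map_intCast]
  push_cast
  ring

noncomputable def Fdft (N : ℕ) (a : Fin N → ℝ) (n : Fin N) : ℂ :=
  ∑ k : Fin N, (a k : ℂ) * eN N (-((n : ℕ) : ℤ) * ((k : ℕ) : ℤ))

section Main
variable {N : ℕ} [NeZero N] (a : Fin N → ℝ)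

lemma S0 (n : Fin N) :
    Fdft N a n * (starRingEnd ℂ) (Fdft N a n) =
      ∑ s : Fin N, ((∑ j : Fin N, a j * a (j + s) : ℝ) : ℂ) * eN N (((n : ℕ) : ℤ) * ((s : ℕ) : ℤ)) := by
  have hNz : N ≠ 0 := NeZero.ne N
  have hconj : (starRingEnd ℂ) (Fdft N a n) =
      ∑ k : Fin N, (a k : ℂ) * eN N (((n : ℕ) : ℤ) * ((k : ℕ) : ℤ)) := by
    rw [Fdft, map_sum]
    refine Finset.sum_congr rfl fun k _ => ?_
    rw [map_mul, conj_eN, Complex.conj_ofReal]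
    congr 1
    ring_nf
  rw [hconj, Fdft, Finset.sum_mul_sum]
  have step1 : ∀ j k : Fin N,
      (a j : ℂ) * eN N (-((n : ℕ) : ℤ) * ((j : ℕ) : ℤ)) * ((a k : ℂ) * eN N (((n : ℕ) : ℤ) * ((k : ℕ) : ℤ)))
      = (a j : ℂ) * (a k : ℂ) * eN N (((n : ℕ) : ℤ) * (((k : ℕ) : ℤ) - ((j : ℕ) : ℤ))) := by
    intro j k
    rw [show ((n : ℕ) : ℤ) * (((k : ℕ) : ℤ) - ((j : ℕ) : ℤ))
        = (-((n : ℕ) : ℤ) * ((j : ℕ) : ℤ)) + (((n : ℕ) : ℤ) * ((k : ℕ) : ℤ)) by ring, eN_add]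
    ring
  calc (∑ j : Fin N, ∑ k : Fin N,
        (a j : ℂ) * eN N (-((n : ℕ) : ℤ) * ((j : ℕ) : ℤ)) * ((a k : ℂ) * eN N (((n : ℕ) : ℤ) * ((k : ℕ) : ℤ))))
      = ∑ j : Fin N, ∑ s : Fin N,
        (a j : ℂ) * (a (j + s) : ℂ) * eN N (((n : ℕ) : ℤ) * ((s : ℕ) : ℤ)) := by
        refine Finset.sum_congr rfl fun j _ => ?_
        rw [← Equiv.sum_comp (Equiv.addLeft j) (fun k => (a j : ℂ) *
            eN N (-((n : ℕ) : ℤ) * ((j : ℕ) : ℤ)) *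
            ((a k : ℂ) * eN N (((n : ℕ) : ℤ) * ((k : ℕ) : ℤ))))]
        refine Finset.sum_congr rfl fun s _ => ?_
        simp only [Equiv.coe_addLeft]
        rw [step1 j (j + s)]
        refine congrArg _ (eN_congr N hNz ?_)
        have h := fin_val_add j s
        have : (N : ℤ) ∣ (((n:ℕ):ℤ) * ((((j+s : Fin N):ℕ):ℤ) - ((j:ℕ):ℤ)) - ((n:ℕ):ℤ) * ((s:ℕ):ℤ)) := by
          have h2 : (((n:ℕ):ℤ) * ((((j+s : Fin N):ℕ):ℤ) - ((j:ℕ):ℤ)) - ((n:ℕ):ℤ) * ((s:ℕ):ℤ))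
              = -(((n:ℕ):ℤ)) * (((j:ℕ):ℤ) + ((s:ℕ):ℤ) - (((j+s : Fin N):ℕ):ℤ)) := by ring
          rw [h2]
          exact h.mul_left _
        exact this
    _ = ∑ s : Fin N, ((∑ j : Fin N, a j * a (j + s) : ℝ) : ℂ) * eN N (((n : ℕ) : ℤ) * ((s : ℕ) : ℤ)) := by
        rw [Finset.sum_comm]
        refine Finset.sum_congr rfl fun s _ => ?_
        push_cast
        rw [Finset.sum_mul]

lemma S1 (hcog : ∀ s : Fin N, (∑ j : Fin N, a j * a (j + s)) = if s = 0 then 1 else 0)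
    (n : Fin N) : Fdft N a n * (starRingEnd ℂ) (Fdft N a n) = 1 := by
  rw [S0 a n]
  have h : ∀ s : Fin N, ((∑ j : Fin N, a j * a (j + s) : ℝ) : ℂ) * eN N (((n:ℕ):ℤ) * ((s:ℕ):ℤ))
      = if s = (0 : Fin N) then eN N (((n:ℕ):ℤ) * ((s:ℕ):ℤ)) else 0 := by
    intro s
    rw [hcog s]
    split_ifs <;> push_cast <;> ring
  rw [Finset.sum_congr rfl fun s _ => h s, Finset.sum_ite_eq' Finset.univ (0 : Fin N)]
  simp [eN_zero]

lemma S2 (h1 : ∀ n : Fin N, Fdft N a n * (starRingEnd ℂ) (Fdft N a n) = 1) :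
    ∀ s : Fin N, (∑ j : Fin N, a j * a (j + s)) = if s = 0 then 1 else 0 := by
  have hNz : N ≠ 0 := NeZero.ne N
  intro t
  have key : ∀ n : Fin N,
      (∑ s : Fin N, ((∑ j : Fin N, a j * a (j + s) : ℝ) : ℂ) * eN N (((n:ℕ):ℤ) * ((s:ℕ):ℤ))) = 1 :=
    fun n => by rw [← S0 a n, h1 n]
  have main : (∑ n : Fin N, (∑ s : Fin N, ((∑ j : Fin N, a j * a (j + s) : ℝ) : ℂ) *
        eN N (((n:ℕ):ℤ) * ((s:ℕ):ℤ))) * eN N (-((n:ℕ):ℤ) * ((t:ℕ):ℤ)))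
      = ∑ n : Fin N, eN N (-((t:ℕ):ℤ) * ((n:ℕ):ℤ)) := by
    refine Finset.sum_congr rfl fun n _ => ?_
    rw [key n, one_mul]
    congr 1
    ring
  have lhs : (∑ n : Fin N, (∑ s : Fin N, ((∑ j : Fin N, a j * a (j + s) : ℝ) : ℂ) *
        eN N (((n:ℕ):ℤ) * ((s:ℕ):ℤ))) * eN N (-((n:ℕ):ℤ) * ((t:ℕ):ℤ)))
      = ((∑ j : Fin N, a j * a (j + t) : ℝ) : ℂ) * N := by
    have expand : ∀ n : Fin N, (∑ s : Fin N, ((∑ j : Fin N, a j * a (j + s) : ℝ) : ℂ) *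
          eN N (((n:ℕ):ℤ) * ((s:ℕ):ℤ))) * eN N (-((n:ℕ):ℤ) * ((t:ℕ):ℤ))
        = ∑ s : Fin N, ((∑ j : Fin N, a j * a (j + s) : ℝ) : ℂ) *
          eN N ((((s:ℕ):ℤ) - ((t:ℕ):ℤ)) * ((n:ℕ):ℤ)) := by
      intro n
      rw [Finset.sum_mul]
      refine Finset.sum_congr rfl fun s _ => ?_
      rw [mul_assoc, ← eN_add]
      congr 2
      ring
    rw [Finset.sum_congr rfl fun n _ => expand n, Finset.sum_comm]
    have inner : ∀ s : Fin N,
        (∑ n : Fin N, ((∑ j : Fin N, a j * a (j + s) : ℝ) : ℂ) *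
          eN N ((((s:ℕ):ℤ) - ((t:ℕ):ℤ)) * ((n:ℕ):ℤ)))
        = if s = t then ((∑ j : Fin N, a j * a (j + s) : ℝ) : ℂ) * N else 0 := by
      intro s
      rw [← Finset.mul_sum, eN_orth N hNz]
      rw [if_congr (fin_dvd_sub_iff s t) rfl rfl]
      split_ifs <;> simp
    rw [Finset.sum_congr rfl fun s _ => inner s, Finset.sum_ite_eq' Finset.univ t]
    simp
  have rhs : (∑ n : Fin N, eN N (-((t:ℕ):ℤ) * ((n:ℕ):ℤ))) = if t = 0 then (N : ℂ) else 0 := by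
    rw [eN_orth N hNz]
    congr 1
    rw [dvd_neg, fin_dvd_val_iff]
  rw [lhs, rhs] at main
  have hNc : (N : ℂ) ≠ 0 := Nat.cast_ne_zero.mpr hNz
  by_cases ht : t = 0
  · rw [if_pos ht] at main
    have : ((∑ j : Fin N, a j * a (j + t) : ℝ) : ℂ) = 1 := by
      push_cast
      field_simp at main
      exact_mod_cast main
    rw [if_pos ht]
    exact_mod_cast this
  · rw [if_neg ht] at main
    have : ((∑ j : Fin N, a j * a (j + t) : ℝ) : ℂ) = 0 :=
      (mul_eq_zero.mp main).resolve_right hNc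
    rw [if_neg ht]
    exact_mod_cast this

lemma invDFT (k : Fin N) :
    ∑ n : Fin N, Fdft N a n * eN N (((n:ℕ):ℤ) * ((k:ℕ):ℤ)) = (N : ℂ) * a k := by
  have hNz : N ≠ 0 := NeZero.ne N
  have expand : ∀ n : Fin N, Fdft N a n * eN N (((n:ℕ):ℤ) * ((k:ℕ):ℤ))
      = ∑ j : Fin N, (a j : ℂ) * eN N ((((k:ℕ):ℤ) - ((j:ℕ):ℤ)) * ((n:ℕ):ℤ)) := by
    intro n
    rw [Fdft, Finset.sum_mul]
    refine Finset.sum_congr rfl fun j _ => ?_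
    rw [mul_assoc, ← eN_add]
    congr 2
    ring
  rw [Finset.sum_congr rfl fun n _ => expand n, Finset.sum_comm]
  have inner : ∀ j : Fin N,
      (∑ n : Fin N, (a j : ℂ) * eN N ((((k:ℕ):ℤ) - ((j:ℕ):ℤ)) * ((n:ℕ):ℤ)))
      = if j = k then (a j : ℂ) * N else 0 := by
    intro j
    rw [← Finset.mul_sum, eN_orth N hNz]
    have : ((N:ℤ) ∣ ((k:ℕ):ℤ) - ((j:ℕ):ℤ)) ↔ j = k := by
      rw [fin_dvd_sub_iff k j]
      exact eq_comm
    rw [if_congr this rfl rfl]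
    split_ifs <;> simp
  rw [Finset.sum_congr rfl fun j _ => inner j, Finset.sum_ite_eq' Finset.univ k]
  simp [mul_comm]

lemma conj_Fdft (n : Fin N) : (starRingEnd ℂ) (Fdft N a n) = Fdft N a (-n) := by
  have hNz : N ≠ 0 := NeZero.ne N
  rw [Fdft, Fdft, map_sum]
  refine Finset.sum_congr rfl fun k _ => ?_
  rw [map_mul, conj_eN, Complex.conj_ofReal]
  refine congrArg _ (eN_congr N hNz ?_)
  have h : (N : ℤ) ∣ ((n : ℕ) : ℤ) + (((-n : Fin N) : ℕ) : ℤ) := by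
    rw [fin_dvd_add_iff]
    simp
  have h2 : -(-((n:ℕ):ℤ) * ((k:ℕ):ℤ)) - -(((-n : Fin N):ℕ):ℤ) * ((k:ℕ):ℤ)
      = (((n : ℕ) : ℤ) + (((-n : Fin N) : ℕ) : ℤ)) * ((k:ℕ):ℤ) := by ring
  rw [h2]
  exact h.mul_right _

lemma S3 (h1 : ∀ n : Fin N, Fdft N a n * (starRingEnd ℂ) (Fdft N a n) = 1) :
    ∃ θ : Fin N → ℝ,
      ((∃ m : ℤ, θ 0 = π / 4 + 2 * π * m) ∨ (∃ m : ℤ, θ 0 = 5 * π / 4 + 2 * π * m)) ∧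
      (∀ n : Fin N, n ≠ 0 → ∃ m : ℤ, θ n + θ (-n) = π / 2 + 2 * π * m) ∧
      (∀ k : Fin N,
        a k = (Real.sqrt 2 / N) *
          ∑ n : Fin N, Real.cos ((2 * π * (n : ℕ) / N) * (k : ℕ) + θ n)) := by
  have hNz : N ≠ 0 := NeZero.ne N
  set φ : Fin N → ℝ := fun n => (Fdft N a n).arg with hφ
  refine ⟨fun n => φ n + π / 4, ?_, ?_, ?_⟩
  · -- θ 0 condition
    have h0 : Fdft N a 0 = ((∑ k : Fin N, a k : ℝ) : ℂ) := by
      rw [Fdft]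
      push_cast
      refine Finset.sum_congr rfl fun k _ => ?_
      simp [eN_zero]
    have hc : (starRingEnd ℂ) (Fdft N a 0) = Fdft N a 0 := by
      rw [h0, Complex.conj_ofReal]
    have hsq : Fdft N a 0 ^ 2 = 1 := by
      have := h1 0
      rw [hc] at this
      rw [sq]
      exact this
    have hcases : Fdft N a 0 = 1 ∨ Fdft N a 0 = -1 := by
      have hz : (Fdft N a 0 - 1) * (Fdft N a 0 + 1) = 0 := by linear_combination hsq
      rcases mul_eq_zero.mp hz with h | h
      · left; linear_combination h
      · right; linear_combination h
    rcases hcases with h | h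
    · left
      refine ⟨0, ?_⟩
      have h2 : φ 0 = 0 := by rw [hφ]; simp only [h, Complex.arg_one]
      show φ 0 + π / 4 = _
      rw [h2]
      push_cast
      ring
    · right
      refine ⟨0, ?_⟩
      have h2 : φ 0 = π := by rw [hφ]; simp only [h, Complex.arg_neg_one]
      show φ 0 + π / 4 = _
      rw [h2]
      push_cast
      ring
  · -- pair condition
    intro n _
    have hF : ∀ m : Fin N, Fdft N a m = Complex.exp ((φ m : ℂ) * Complex.I) := by
      intro m
      have habs : ‖Fdft N a m‖ = 1 := by
        have h2 := h1 m
        rw [Complex.mul_conj] at h2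
        have h3 : Complex.normSq (Fdft N a m) = 1 := by exact_mod_cast h2
        rw [Complex.norm_def, h3, Real.sqrt_one]
      have := Complex.norm_mul_exp_arg_mul_I (Fdft N a m)
      rw [habs] at this
      simpa using this.symm
    have key : Complex.exp (((φ n + φ (-n) : ℝ) : ℂ) * Complex.I) = 1 := by
      push_cast
      rw [add_mul, Complex.exp_add, ← hF n, ← hF (-n), ← conj_Fdft a n]
      exact h1 n
    rw [Complex.exp_eq_one_iff] at key
    obtain ⟨m, hm⟩ := key
    refine ⟨m, ?_⟩
    have hm2 : ((φ n + φ (-n) : ℝ) : ℂ) = ((2 * π * m : ℝ) : ℂ) := by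
      apply mul_right_cancel₀ Complex.I_ne_zero
      rw [hm]
      push_cast
      ring
    have hm3 : φ n + φ (-n) = 2 * π * m := by exact_mod_cast hm2
    linarith
  · -- the formula
    intro k
    have hF : ∀ m : Fin N, Fdft N a m = Complex.exp ((φ m : ℂ) * Complex.I) := by
      intro m
      have habs : ‖Fdft N a m‖ = 1 := by
        have h2 := h1 m
        rw [Complex.mul_conj] at h2
        have h3 : Complex.normSq (Fdft N a m) = 1 := by exact_mod_cast h2
        rw [Complex.norm_def, h3, Real.sqrt_one]
      have := Complex.norm_mul_exp_arg_mul_I (Fdft N a m)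
      rw [habs] at this
      simpa using this.symm
    have hinv : ((N * a k : ℝ) : ℂ) = ∑ n : Fin N, Fdft N a n * eN N (((n:ℕ):ℤ) * ((k:ℕ):ℤ)) := by
      push_cast
      exact (invDFT a k).symm
    have hexp : ∀ n : Fin N, Fdft N a n * eN N (((n:ℕ):ℤ) * ((k:ℕ):ℤ))
        = Complex.exp (((2 * π * (n:ℕ) / N * (k:ℕ) + φ n : ℝ) : ℂ) * Complex.I) := by
      intro n
      rw [hF n, eN, ← Complex.exp_add]
      congr 1
      have hNc : (N : ℂ) ≠ 0 := Nat.cast_ne_zero.mpr hNz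
      push_cast
      field_simp
      ring
    rw [Finset.sum_congr rfl fun n _ => hexp n] at hinv
    have hre : (N : ℝ) * a k = ∑ n : Fin N, Real.cos (2 * π * (n:ℕ) / N * (k:ℕ) + φ n) := by
      have h2 := congrArg Complex.re hinv
      rw [Complex.ofReal_re, Complex.re_sum] at h2
      rw [h2]
      exact Finset.sum_congr rfl fun n _ => Complex.exp_ofReal_mul_I_re _
    have him : (0 : ℝ) = ∑ n : Fin N, Real.sin (2 * π * (n:ℕ) / N * (k:ℕ) + φ n) := by
      have h2 := congrArg Complex.im hinv
      rw [Complex.ofReal_im, Complex.im_sum] at h2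
      rw [h2]
      exact Finset.sum_congr rfl fun n _ => Complex.exp_ofReal_mul_I_im _
    have hcos : ∀ n : Fin N, Real.cos ((2 * π * (n:ℕ) / N) * (k:ℕ) + (φ n + π/4))
        = Real.cos (2 * π * (n:ℕ) / N * (k:ℕ) + φ n) * (Real.sqrt 2 / 2)
          - Real.sin (2 * π * (n:ℕ) / N * (k:ℕ) + φ n) * (Real.sqrt 2 / 2) := by
      intro n
      rw [show (2 * π * (n:ℕ) / N) * (k:ℕ) + (φ n + π/4)
          = (2 * π * (n:ℕ) / N * (k:ℕ) + φ n) + π/4 by ring,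
        Real.cos_add, Real.cos_pi_div_four, Real.sin_pi_div_four]
    show a k = Real.sqrt 2 / N * ∑ n : Fin N, Real.cos ((2 * π * (n:ℕ) / N) * (k:ℕ) + (φ n + π/4))
    rw [Finset.sum_congr rfl fun n _ => hcos n, Finset.sum_sub_distrib,
      ← Finset.sum_mul, ← Finset.sum_mul, ← hre, ← him]
    have h2 : Real.sqrt 2 * Real.sqrt 2 = 2 := Real.mul_self_sqrt (by norm_num)
    have hN0 : (N : ℝ) ≠ 0 := Nat.cast_ne_zero.mpr hNz
    field_simp
    linear_combination (-(a k) * (N : ℝ)) * h2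

lemma eN_exp_pos {N : ℕ} (hNz : N ≠ 0) (m k : ℕ) :
    eN N ((m : ℤ) * (k : ℤ)) = Complex.exp (((2 * π * m / N * k : ℝ) : ℂ) * Complex.I) := by
  have hNc : (N : ℂ) ≠ 0 := Nat.cast_ne_zero.mpr hNz
  rw [eN]
  congr 1
  push_cast
  ring

lemma eN_exp_neg {N : ℕ} (hNz : N ≠ 0) (m k : ℕ) :
    eN N (-((m : ℤ) * (k : ℤ))) = Complex.exp (-((2 * π * m / N * k : ℝ) : ℂ) * Complex.I) := by
  have hNc : (N : ℂ) ≠ 0 := Nat.cast_ne_zero.mpr hNz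
  rw [eN]
  congr 1
  push_cast
  ring

lemma S4 (θ : Fin N → ℝ)
    (hform : ∀ k : Fin N, a k = (Real.sqrt 2 / N) *
      ∑ n : Fin N, Real.cos ((2 * π * (n : ℕ) / N) * (k : ℕ) + θ n))
    (n : Fin N) :
    Fdft N a n = ((Real.sqrt 2 / 2 : ℝ) : ℂ) *
      (Complex.exp ((θ n : ℂ) * Complex.I) + Complex.exp (-(θ (-n) : ℂ) * Complex.I)) := by
  have hNz : N ≠ 0 := NeZero.ne N
  have hNc : (N : ℂ) ≠ 0 := Nat.cast_ne_zero.mpr hNz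
  -- cast the formula to ℂ and expand cosines into exponentials
  have hak : ∀ k : Fin N, (a k : ℂ) = ((Real.sqrt 2 : ℝ) : ℂ) / (2 * N) *
      ∑ m : Fin N, (Complex.exp ((θ m : ℂ) * Complex.I) * eN N (((m:ℕ):ℤ) * ((k:ℕ):ℤ))
        + Complex.exp (-(θ m : ℂ) * Complex.I) * eN N (-(((m:ℕ):ℤ) * ((k:ℕ):ℤ)))) := by
    intro k
    have hterm : ∀ m : Fin N, ((Real.cos ((2 * π * (m:ℕ) / N) * (k:ℕ) + θ m) : ℝ) : ℂ)
        = (Complex.exp ((θ m : ℂ) * Complex.I) * eN N (((m:ℕ):ℤ) * ((k:ℕ):ℤ))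
          + Complex.exp (-(θ m : ℂ) * Complex.I) * eN N (-(((m:ℕ):ℤ) * ((k:ℕ):ℤ)))) / 2 := by
      intro m
      rw [Complex.ofReal_cos]
      have h2c := Complex.two_cos (((2 * π * (m:ℕ) / N) * (k:ℕ) + θ m : ℝ) : ℂ)
      have he1 : Complex.exp ((((2 * π * (m:ℕ) / N) * (k:ℕ) + θ m : ℝ) : ℂ) * Complex.I)
          = Complex.exp ((θ m : ℂ) * Complex.I) * eN N (((m:ℕ):ℤ) * ((k:ℕ):ℤ)) := by
        rw [eN_exp_pos hNz, ← Complex.exp_add]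
        congr 1
        push_cast
        ring
      have he2 : Complex.exp (-(((2 * π * (m:ℕ) / N) * (k:ℕ) + θ m : ℝ) : ℂ) * Complex.I)
          = Complex.exp (-(θ m : ℂ) * Complex.I) * eN N (-(((m:ℕ):ℤ) * ((k:ℕ):ℤ))) := by
        rw [eN_exp_neg hNz, ← Complex.exp_add]
        congr 1
        push_cast
        ring
      rw [← he1, ← he2]
      linear_combination h2c / 2
    have h2 := congrArg (fun r : ℝ => (r : ℂ)) (hform k)
    simp only [Complex.ofReal_mul, Complex.ofReal_div, Complex.ofReal_natCast,
      Complex.ofReal_sum] at h2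
    rw [h2, Finset.sum_congr rfl fun m _ => hterm m, ← Finset.sum_div]
    ring
  -- now compute the DFT
  have expand : ∀ k : Fin N,
      (a k : ℂ) * eN N (-((n:ℕ):ℤ) * ((k:ℕ):ℤ))
      = ((Real.sqrt 2 : ℝ) : ℂ) / (2 * N) *
        ∑ m : Fin N, (Complex.exp ((θ m : ℂ) * Complex.I) *
            eN N (((((m:ℕ):ℤ)) - (((n:ℕ):ℤ))) * ((k:ℕ):ℤ))
          + Complex.exp (-(θ m : ℂ) * Complex.I) *
            eN N ((-(((m:ℕ):ℤ)) - (((n:ℕ):ℤ))) * ((k:ℕ):ℤ))) := by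
    intro k
    rw [hak k, mul_assoc]
    congr 1
    rw [Finset.sum_mul]
    refine Finset.sum_congr rfl fun m _ => ?_
    rw [add_mul, mul_assoc, mul_assoc, ← eN_add, ← eN_add]
    congr 3 <;> ring
  rw [Fdft, Finset.sum_congr rfl fun k _ => expand k, ← Finset.mul_sum, Finset.sum_comm]
  have inner : ∀ m : Fin N,
      (∑ k : Fin N, (Complex.exp ((θ m : ℂ) * Complex.I) *
            eN N (((((m:ℕ):ℤ)) - (((n:ℕ):ℤ))) * ((k:ℕ):ℤ))
          + Complex.exp (-(θ m : ℂ) * Complex.I) *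
            eN N ((-(((m:ℕ):ℤ)) - (((n:ℕ):ℤ))) * ((k:ℕ):ℤ))))
      = (if m = n then Complex.exp ((θ m : ℂ) * Complex.I) * N else 0)
        + (if m = -n then Complex.exp (-(θ m : ℂ) * Complex.I) * N else 0) := by
    intro m
    rw [Finset.sum_add_distrib, ← Finset.mul_sum, ← Finset.mul_sum,
      eN_orth N hNz, eN_orth N hNz]
    have hd1 : ((N:ℤ) ∣ ((m:ℕ):ℤ) - ((n:ℕ):ℤ)) ↔ m = n := fin_dvd_sub_iff m n
    have hd2 : ((N:ℤ) ∣ -((m:ℕ):ℤ) - ((n:ℕ):ℤ)) ↔ m = -n := by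
      rw [show -((m:ℕ):ℤ) - ((n:ℕ):ℤ) = -(((m:ℕ):ℤ) + ((n:ℕ):ℤ)) by ring, dvd_neg]
      exact fin_dvd_add_iff m n
    rw [if_congr hd1 rfl rfl, if_congr hd2 rfl rfl]
    congr 1 <;> split_ifs <;> simp
  rw [Finset.sum_congr rfl fun m _ => inner m, Finset.sum_add_distrib,
    Finset.sum_ite_eq' Finset.univ n, Finset.sum_ite_eq' Finset.univ (-n)]
  simp only [Finset.mem_univ, if_true]
  push_cast
  field_simp

lemma unit_of_canonical (θ : Fin N → ℝ)
    (hθ0 : (∃ m : ℤ, θ 0 = π / 4 + 2 * π * m) ∨ (∃ m : ℤ, θ 0 = 5 * π / 4 + 2 * π * m))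
    (hpair : ∀ n : Fin N, n ≠ 0 → ∃ m : ℤ, θ n + θ (-n) = π / 2 + 2 * π * m)
    (hform : ∀ k : Fin N, a k = (Real.sqrt 2 / N) *
      ∑ n : Fin N, Real.cos ((2 * π * (n : ℕ) / N) * (k : ℕ) + θ n))
    (n : Fin N) : Fdft N a n * (starRingEnd ℂ) (Fdft N a n) = 1 := by
  have hs : ∃ m : ℤ, θ n + θ (-n) = π / 2 + 2 * π * m := by
    by_cases h0 : n = 0
    · subst h0
      rw [neg_zero]
      rcases hθ0 with ⟨m, hm⟩ | ⟨m, hm⟩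
      · exact ⟨2 * m, by rw [hm]; push_cast; ring⟩
      · exact ⟨2 * m + 1, by rw [hm]; push_cast; ring⟩
    · exact hpair n h0
  obtain ⟨m, hm⟩ := hs
  have hFn := S4 a θ hform n
  have c1 : (starRingEnd ℂ) ((θ n : ℂ) * Complex.I) = -(θ n : ℂ) * Complex.I := by
    rw [map_mul, Complex.conj_ofReal, Complex.conj_I]; ring
  have c2 : (starRingEnd ℂ) (-(θ (-n) : ℂ) * Complex.I) = (θ (-n) : ℂ) * Complex.I := by
    rw [map_mul, map_neg, Complex.conj_ofReal, Complex.conj_I]; ring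
  have hconj : (starRingEnd ℂ) (Fdft N a n) = ((Real.sqrt 2 / 2 : ℝ) : ℂ) *
      (Complex.exp (-(θ n : ℂ) * Complex.I) + Complex.exp ((θ (-n) : ℂ) * Complex.I)) := by
    rw [hFn, map_mul, Complex.conj_ofReal, map_add, ← Complex.exp_conj, ← Complex.exp_conj,
      c1, c2]
  rw [hconj, hFn]
  set u := Complex.exp ((θ n : ℂ) * Complex.I) with hu_def
  set v := Complex.exp ((θ (-n) : ℂ) * Complex.I) with hv_def
  have hu : Complex.exp (-(θ n : ℂ) * Complex.I) = u⁻¹ := by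
    rw [hu_def, ← Complex.exp_neg]; congr 1; ring
  have hv : Complex.exp (-(θ (-n) : ℂ) * Complex.I) = v⁻¹ := by
    rw [hv_def, ← Complex.exp_neg]; congr 1; ring
  have huv : u * v = Complex.I := by
    rw [hu_def, hv_def, ← Complex.exp_add]
    have hmc : ((θ n : ℝ) : ℂ) + ((θ (-n) : ℝ) : ℂ) = ((π : ℂ)) / 2 + 2 * π * m := by
      have h3 := congrArg (fun r : ℝ => (r : ℂ)) hm
      push_cast at h3
      linear_combination h3
    have harg : (θ n : ℂ) * Complex.I + (θ (-n) : ℂ) * Complex.I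
        = (m : ℂ) * (2 * π * Complex.I) + (((π / 2 : ℝ)) : ℂ) * Complex.I := by
      push_cast
      linear_combination hmc * Complex.I
    rw [harg, Complex.exp_add, Complex.exp_int_mul_two_pi_mul_I, one_mul]
    rw [Complex.exp_mul_I, ← Complex.ofReal_cos, ← Complex.ofReal_sin,
      Real.cos_pi_div_two, Real.sin_pi_div_two]
    simp
  rw [hu, hv]
  have hune : u ≠ 0 := Complex.exp_ne_zero _
  have hvne : v ≠ 0 := Complex.exp_ne_zero _
  have huvinv : u⁻¹ * v⁻¹ = -Complex.I := by rw [← mul_inv, huv, Complex.inv_I]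
  have h2c : ((Real.sqrt 2 : ℝ) : ℂ) * ((Real.sqrt 2 : ℝ) : ℂ) = 2 := by
    rw [← Complex.ofReal_mul, Real.mul_self_sqrt (by norm_num)]
    norm_num
  have c2 : ((Real.sqrt 2 / 2 : ℝ) : ℂ) * ((Real.sqrt 2 / 2 : ℝ) : ℂ) = 1 / 2 := by
    push_cast
    linear_combination h2c / 4
  have expand : ((Real.sqrt 2 / 2 : ℝ) : ℂ) * (u + v⁻¹) * (((Real.sqrt 2 / 2 : ℝ) : ℂ) * (u⁻¹ + v))
      = ((Real.sqrt 2 / 2 : ℝ) : ℂ) * ((Real.sqrt 2 / 2 : ℝ) : ℂ) *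
        (u * u⁻¹ + v⁻¹ * v + u * v + u⁻¹ * v⁻¹) := by ring
  rw [expand, mul_inv_cancel₀ hune, inv_mul_cancel₀ hvne, huv, huvinv, c2]
  ring

end Main

theorem cog_iff_canonical_form (N : ℕ) (hN : 2 ≤ N) [NeZero N] (a : Fin N → ℝ) :
    (∀ s : Fin N, (∑ j : Fin N, a j * a (j + s)) = if s = 0 then 1 else 0) ↔
      ∃ θ : Fin N → ℝ,
        ((∃ m : ℤ, θ 0 = π / 4 + 2 * π * m) ∨ (∃ m : ℤ, θ 0 = 5 * π / 4 + 2 * π * m)) ∧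
        (∀ n : Fin N, n ≠ 0 → ∃ m : ℤ, θ n + θ (-n) = π / 2 + 2 * π * m) ∧
        (∀ k : Fin N,
          a k = (Real.sqrt 2 / N) *
            ∑ n : Fin N, Real.cos ((2 * π * (n : ℕ) / N) * (k : ℕ) + θ n)) := by
  constructor
  · intro hcog
    exact S3 a (S1 a hcog)
  · rintro ⟨θ, hθ0, hpair, hform⟩
    exact S2 a (unit_of_canonical a θ hθ0 hpair hform)
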